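/- Let H be the bosonization of the superline over a field k (char k ≠ 2) and α, β, γ ∈ k. Define the bilinear map φ: H ⊗ H → H on the basis {1, g, x, gx} by: φ(g ⊗ x) = φ(g ⊗ gx) = α·1, φ(x ⊗ g) = −α·1, φ(gx ⊗ g) = γg, φ(gx ⊗ x) = β·1 + γx, φ(gx ⊗ gx) = −β·1 + γx, and φ = 0 on all other pairs of basis elements. Then φ satisfies both adjoint 2-cocycle conditions: ad(φ ⊗ 1) + φ(ad ⊗ 1) − φ(1 ⊗ μ) = 0 and (φ ⊗ μ)(1 ⊗ τ ⊗ 1)(Δ ⊗ Δ) = (1 ⊗ μ)(τ ⊗ 1)(1 ⊗ Δ)(1 ⊗ φ)(τ ⊗ 1)(1 ⊗ Δ). -/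

import Mathlib

open TensorProduct

/-- The adjoint map of a Hopf algebra, `ad(a ⊗ b) = S(b₁) a b₂`. -/
noncomputable def HopfAdjoint (k H : Type*) [CommSemiring k] [Semiring H]
    [HopfAlgebra k H] : H ⊗[k] H →ₗ[k] H :=
  (LinearMap.mul' k H) ∘ₗ
    (TensorProduct.map
      ((LinearMap.mul' k H) ∘ₗ
        (TensorProduct.map (HopfAlgebra.antipode (R := k)) LinearMap.id) ∘ₗ
        (TensorProduct.comm k H H).toLinearMap)
      LinearMap.id) ∘ₗ
    (TensorProduct.assoc k H H H).symm.toLinearMap ∘ₗ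
    (TensorProduct.map LinearMap.id Coalgebra.comul)

/-- The transposition `τ ⊗ 1` on `H ⊗ (H ⊗ H)`, swapping the first two factors. -/
noncomputable def tauOne (k H : Type*) [CommSemiring k] [AddCommMonoid H] [Module k H] :
    H ⊗[k] (H ⊗[k] H) →ₗ[k] H ⊗[k] (H ⊗[k] H) :=
  (TensorProduct.assoc k H H H).toLinearMap ∘ₗ
    (TensorProduct.map (TensorProduct.comm k H H).toLinearMap LinearMap.id) ∘ₗ
    (TensorProduct.assoc k H H H).symm.toLinearMap


section Helpers
open TensorProduct

lemma ad_tmul₁ {k H : Type*} [CommSemiring k] [Semiring H] [HopfAlgebra k H]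
    (a b c d : H) (h : Coalgebra.comul (R := k) b = c ⊗ₜ[k] d) :
    HopfAdjoint k H (a ⊗ₜ[k] b) = HopfAlgebra.antipode (R := k) c * a * d := by
  simp [HopfAdjoint, h, mul_assoc]

lemma ad_tmul₂ {k H : Type*} [CommSemiring k] [Semiring H] [HopfAlgebra k H]
    (a b c d e f : H) (h : Coalgebra.comul (R := k) b = c ⊗ₜ[k] d + e ⊗ₜ[k] f) :
    HopfAdjoint k H (a ⊗ₜ[k] b) =
      HopfAlgebra.antipode (R := k) c * a * d + HopfAlgebra.antipode (R := k) e * a * f := by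
  simp [HopfAdjoint, h, tmul_add, mul_assoc]

lemma tauOne_tmul {k H : Type*} [CommSemiring k] [AddCommMonoid H] [Module k H]
    (a b c : H) : tauOne k H (a ⊗ₜ[k] (b ⊗ₜ[k] c)) = b ⊗ₜ[k] (a ⊗ₜ[k] c) := by
  simp [tauOne]

end Helpers

set_option maxHeartbeats 3200000 in
/-- For the bosonization of the superline `H` (basis `{1, g, x, gx}`) over a field
`k` of characteristic `≠ 2` and `α, β, γ ∈ k`, the bilinear map `φ` given by
`φ(g ⊗ x) = φ(g ⊗ gx) = α·1`, `φ(x ⊗ g) = −α·1`, `φ(gx ⊗ g) = γ g`,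
`φ(gx ⊗ x) = β·1 + γ x`, `φ(gx ⊗ gx) = −β·1 + γ x`, and `0` on all other pairs
of basis elements, satisfies both adjoint 2-cocycle conditions:
`ad(φ ⊗ 1) + φ(ad ⊗ 1) − φ(1 ⊗ μ) = 0` and
`(φ ⊗ μ)(1 ⊗ τ ⊗ 1)(Δ ⊗ Δ) = (1 ⊗ μ)(τ ⊗ 1)(1 ⊗ Δ)(1 ⊗ φ)(τ ⊗ 1)(1 ⊗ Δ)`. -/
theorem superline_two_cocycle (k H : Type*) [Field k] [Ring H]
    [HopfAlgebra k H] (hchar : (2 : k) ≠ 0) (g x : H) (α β γ : k)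
    (B : Module.Basis (Fin 4) k H)
    (hB0 : B 0 = 1) (hB1 : B 1 = g) (hB2 : B 2 = x) (hB3 : B 3 = g * x)
    (hx2 : x * x = 0) (hg2 : g * g = 1) (hxg : x * g = -(g * x))
    (hΔx : Coalgebra.comul (R := k) x = x ⊗ₜ[k] 1 + g ⊗ₜ[k] x)
    (hΔg : Coalgebra.comul (R := k) g = g ⊗ₜ[k] g)
    (hεx : Coalgebra.counit (R := k) x = 0)
    (hεg : Coalgebra.counit (R := k) g = 1)
    (hSx : HopfAlgebra.antipode (R := k) x = -(g * x))
    (hSg : HopfAlgebra.antipode (R := k) g = g)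
    (φ : H ⊗[k] H →ₗ[k] H)
    -- the nonzero values of φ
    (hφ1 : φ (g ⊗ₜ[k] x) = α • (1 : H))
    (hφ2 : φ (g ⊗ₜ[k] (g * x)) = α • (1 : H))
    (hφ3 : φ (x ⊗ₜ[k] g) = -(α • (1 : H)))
    (hφ4 : φ ((g * x) ⊗ₜ[k] g) = γ • g)
    (hφ5 : φ ((g * x) ⊗ₜ[k] x) = β • (1 : H) + γ • x)
    (hφ6 : φ ((g * x) ⊗ₜ[k] (g * x)) = -(β • (1 : H)) + γ • x)
    -- φ vanishes on all other pairs of basis elements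
    (hφ01 : φ ((1 : H) ⊗ₜ[k] (1 : H)) = 0) (hφ02 : φ ((1 : H) ⊗ₜ[k] g) = 0)
    (hφ03 : φ ((1 : H) ⊗ₜ[k] x) = 0) (hφ04 : φ ((1 : H) ⊗ₜ[k] (g * x)) = 0)
    (hφ05 : φ (g ⊗ₜ[k] (1 : H)) = 0) (hφ06 : φ (g ⊗ₜ[k] g) = 0)
    (hφ07 : φ (x ⊗ₜ[k] (1 : H)) = 0) (hφ08 : φ (x ⊗ₜ[k] x) = 0)
    (hφ09 : φ (x ⊗ₜ[k] (g * x)) = 0) (hφ10 : φ ((g * x) ⊗ₜ[k] (1 : H)) = 0) :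
    (HopfAdjoint k H ∘ₗ TensorProduct.map φ LinearMap.id +
        φ ∘ₗ TensorProduct.map (HopfAdjoint k H) LinearMap.id -
        φ ∘ₗ (TensorProduct.map LinearMap.id (LinearMap.mul' k H)) ∘ₗ
          (TensorProduct.assoc k H H H).toLinearMap = 0) ∧
      (TensorProduct.map φ (LinearMap.mul' k H) ∘ₗ
          (TensorProduct.tensorTensorTensorComm k H H H H).toLinearMap ∘ₗ
          TensorProduct.map (Coalgebra.comul (R := k)) (Coalgebra.comul (R := k)) =
        TensorProduct.map LinearMap.id (LinearMap.mul' k H) ∘ₗ tauOne k H ∘ₗ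
          TensorProduct.map LinearMap.id (Coalgebra.comul (R := k)) ∘ₗ
          TensorProduct.map LinearMap.id φ ∘ₗ tauOne k H ∘ₗ
          TensorProduct.map LinearMap.id (Coalgebra.comul (R := k))) := by
  classical
  have hΔ1 : Coalgebra.comul (R := k) (1 : H) = (1 : H) ⊗ₜ[k] (1 : H) := by
    rw [Bialgebra.comul_one, Algebra.TensorProduct.one_def]
  have hΔgx : Coalgebra.comul (R := k) (g * x)
      = (g * x) ⊗ₜ[k] g + (1 : H) ⊗ₜ[k] (g * x) := by
    rw [Bialgebra.comul_mul, hΔg, hΔx]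
    simp [mul_add, Algebra.TensorProduct.tmul_mul_tmul, hg2]
  have hεgx : Coalgebra.counit (R := k) (g * x) = 0 := by
    rw [Bialgebra.counit_mul, hεx, mul_zero]
  have hggx : g * (g * x) = x := by rw [← mul_assoc, hg2, one_mul]
  have hgxg : g * x * g = -x := by rw [mul_assoc, hxg, mul_neg, hggx]
  have hxgx : x * (g * x) = 0 := by
    rw [← mul_assoc, hxg, neg_mul, mul_assoc, hx2, mul_zero, neg_zero]
  have hgxx : g * x * x = 0 := by rw [mul_assoc, hx2, mul_zero]
  have hgxgx : g * x * (g * x) = 0 := by rw [mul_assoc, hxgx, mul_zero]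
  have hS1 : HopfAlgebra.antipode (R := k) (1 : H) = 1 := by
    have h := HopfAlgebra.mul_antipode_rTensor_comul_apply (R := k) (A := H) 1
    rw [hΔ1] at h
    simpa using h
  have hSgx : HopfAlgebra.antipode (R := k) (g * x) = x := by
    have h := HopfAlgebra.mul_antipode_rTensor_comul_apply (R := k) (A := H) (g * x)
    rw [hΔgx] at h
    simp only [LinearMap.rTensor_tmul, map_add, LinearMap.mul'_apply, hS1, one_mul,
      hεgx, map_zero] at h
    have h1 : HopfAlgebra.antipode (R := k) (g * x) * g = -(g * x) := by
      rw [eq_neg_iff_add_eq_zero]; exact h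
    calc HopfAlgebra.antipode (R := k) (g * x)
        = HopfAlgebra.antipode (R := k) (g * x) * (g * g) := by rw [hg2, mul_one]
      _ = HopfAlgebra.antipode (R := k) (g * x) * g * g := by rw [mul_assoc]
      _ = -(g * x) * g := by rw [h1]
      _ = x := by rw [neg_mul, hgxg, neg_neg]
  -- adjoint action table
  have ad11 : HopfAdjoint k H ((1:H) ⊗ₜ[k] (1:H)) = 1 := by
    rw [ad_tmul₁ _ _ _ _ hΔ1]; simp [hS1]
  have adg1 : HopfAdjoint k H (g ⊗ₜ[k] (1:H)) = g := by
    rw [ad_tmul₁ _ _ _ _ hΔ1]; simp [hS1]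
  have adx1 : HopfAdjoint k H (x ⊗ₜ[k] (1:H)) = x := by
    rw [ad_tmul₁ _ _ _ _ hΔ1]; simp [hS1]
  have adgx1 : HopfAdjoint k H ((g*x) ⊗ₜ[k] (1:H)) = g * x := by
    rw [ad_tmul₁ _ _ _ _ hΔ1]; simp [hS1]
  have ad1g : HopfAdjoint k H ((1:H) ⊗ₜ[k] g) = 1 := by
    rw [ad_tmul₁ _ _ _ _ hΔg]; simp [hSg, hg2]
  have adgg : HopfAdjoint k H (g ⊗ₜ[k] g) = g := by
    rw [ad_tmul₁ _ _ _ _ hΔg]; simp [hSg, hg2]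
  have adxg : HopfAdjoint k H (x ⊗ₜ[k] g) = -x := by
    rw [ad_tmul₁ _ _ _ _ hΔg]; simp [hSg, hgxg]
  have adgxg : HopfAdjoint k H ((g*x) ⊗ₜ[k] g) = -(g * x) := by
    rw [ad_tmul₁ _ _ _ _ hΔg]; simp [hSg, hggx, hxg]
  have ad1x : HopfAdjoint k H ((1:H) ⊗ₜ[k] x) = 0 := by
    rw [ad_tmul₂ _ _ _ _ _ _ hΔx]; simp [hSx, hSg]
  have adgx : HopfAdjoint k H (g ⊗ₜ[k] x) = x + x := by
    rw [ad_tmul₂ _ _ _ _ _ _ hΔx]; simp [hSx, hSg, hg2, hgxg, neg_mul, neg_neg]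
  have adxx : HopfAdjoint k H (x ⊗ₜ[k] x) = 0 := by
    rw [ad_tmul₂ _ _ _ _ _ _ hΔx]; simp [hSx, hSg, hgxx, neg_mul, hx2]
  have adgxx : HopfAdjoint k H ((g*x) ⊗ₜ[k] x) = 0 := by
    rw [ad_tmul₂ _ _ _ _ _ _ hΔx]; simp [hSx, hSg, hgxgx, hggx, hx2, neg_mul]
  have ad1gx : HopfAdjoint k H ((1:H) ⊗ₜ[k] (g*x)) = 0 := by
    rw [ad_tmul₂ _ _ _ _ _ _ hΔgx]; simp [hSgx, hS1, hxg]
  have adggx : HopfAdjoint k H (g ⊗ₜ[k] (g*x)) = x + x := by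
    rw [ad_tmul₂ _ _ _ _ _ _ hΔgx]
    simp [hSgx, hS1, hxg, hggx, neg_mul, hgxg, neg_neg]
  have adxgx : HopfAdjoint k H (x ⊗ₜ[k] (g*x)) = 0 := by
    rw [ad_tmul₂ _ _ _ _ _ _ hΔgx]; simp [hSgx, hS1, hx2, hxgx]
  have adgxgx : HopfAdjoint k H ((g*x) ⊗ₜ[k] (g*x)) = 0 := by
    rw [ad_tmul₂ _ _ _ _ _ _ hΔgx]; simp [hSgx, hS1, hxgx, hgxgx]
  have hBv : ∀ m : Fin 4, B m = 1 ∨ B m = g ∨ B m = x ∨ B m = g * x := by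
    intro m
    fin_cases m
    · exact Or.inl hB0
    · exact Or.inr (Or.inl hB1)
    · exact Or.inr (Or.inr (Or.inl hB2))
    · exact Or.inr (Or.inr (Or.inr hB3))
  constructor
  · refine ((B.tensorProduct B).tensorProduct B).ext fun p => ?_
    obtain ⟨⟨i, j⟩, l⟩ := p
    simp only [Module.Basis.tensorProduct_apply]
    rcases hBv i with hi | hi | hi | hi <;> rcases hBv j with hj | hj | hj | hj <;>
        rcases hBv l with hl | hl | hl | hl <;> rw [hi, hj, hl] <;>
      simp [Module.Basis.tensorProduct_apply, hB0, hB1, hB2, hB3,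
        TensorProduct.assoc_tmul, LinearMap.mul'_apply,
        hφ1, hφ2, hφ3, hφ4, hφ5, hφ6, hφ01, hφ02, hφ03, hφ04, hφ05, hφ06, hφ07, hφ08,
        hφ09, hφ10, ad11, adg1, adx1, adgx1, ad1g, adgg, adxg, adgxg, ad1x, adgx,
        adxx, adgxx, ad1gx, adggx, adxgx, adgxgx,
        hg2, hx2, hxg, hggx, hgxg, hxgx, hgxx, hgxgx,
        TensorProduct.tmul_add, TensorProduct.add_tmul, TensorProduct.tmul_neg,
        TensorProduct.neg_tmul, TensorProduct.tmul_smul, ← TensorProduct.smul_tmul',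
        mul_neg, neg_mul, neg_neg, smul_neg, add_smul, smul_add] <;>
      module
  · refine (B.tensorProduct B).ext fun p => ?_
    obtain ⟨i, j⟩ := p
    simp only [Module.Basis.tensorProduct_apply]
    rcases hBv i with hi | hi | hi | hi <;> rcases hBv j with hj | hj | hj | hj <;>
        rw [hi, hj] <;>
      simp [Module.Basis.tensorProduct_apply, hB0, hB1, hB2, hB3, tauOne_tmul,
        TensorProduct.tensorTensorTensorComm_tmul, LinearMap.mul'_apply,
        hΔ1, hΔg, hΔx, hΔgx,
        hφ1, hφ2, hφ3, hφ4, hφ5, hφ6, hφ01, hφ02, hφ03, hφ04, hφ05, hφ06, hφ07, hφ08,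
        hφ09, hφ10,
        hg2, hx2, hxg, hggx, hgxg, hxgx, hgxx, hgxgx,
        TensorProduct.tmul_add, TensorProduct.add_tmul, TensorProduct.tmul_neg,
        TensorProduct.neg_tmul, TensorProduct.tmul_smul, ← TensorProduct.smul_tmul',
        mul_neg, neg_mul, neg_neg, smul_neg, add_smul, smul_add] <;>
      module
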